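/- In a Mal'tsev category, any internal reflexive graph admits at most one internal category structure. -/

import Mathlib

open CategoryTheory CategoryTheory.Limits

universe v u v' u'

variable {C : Type u} [Category.{v} C]

/-- An internal relation on an object `X`: a pair of jointly monic morphisms. -/
structure RelOn (X : C) where
  R : C
  r1 : R ⟶ X
  r2 : R ⟶ X
  jmono : ∀ {Z : C} (f g : Z ⟶ R), f ≫ r1 = g ≫ r1 → f ≫ r2 = g ≫ r2 → f = g

namespace RelOn

variable {X : C} (ρ : RelOn X)

def Reflexive : Prop :=
  ∃ δ : X ⟶ ρ.R, δ ≫ ρ.r1 = 𝟙 X ∧ δ ≫ ρ.r2 = 𝟙 X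

def Symmetric : Prop :=
  ∃ σ : ρ.R ⟶ ρ.R, σ ≫ ρ.r1 = ρ.r2 ∧ σ ≫ ρ.r2 = ρ.r1

/-- Transitivity, formulated with generalized elements. -/
def Transitive : Prop :=
  ∀ {Z : C} (a b : Z ⟶ ρ.R), a ≫ ρ.r2 = b ≫ ρ.r1 →
    ∃ t : Z ⟶ ρ.R, t ≫ ρ.r1 = a ≫ ρ.r1 ∧ t ≫ ρ.r2 = b ≫ ρ.r2

def IsEquivalence : Prop := ρ.Reflexive ∧ ρ.Symmetric ∧ ρ.Transitive

/-- The relation is effective: it is the kernel pair of some morphism. -/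
def Effective : Prop :=
  ∃ (Y : C) (f : X ⟶ Y) (h : ρ.r1 ≫ f = ρ.r2 ≫ f),
    Nonempty (IsLimit (PullbackCone.mk ρ.r1 ρ.r2 h))

end RelOn

/-- A Mal'tsev category: every internal reflexive relation is an equivalence relation. -/
class MaltsevCat (C : Type u) [Category.{v} C] : Prop where
  refl_is_equiv : ∀ {X : C} (ρ : RelOn X), ρ.Reflexive → ρ.Symmetric ∧ ρ.Transitive

/-- A regular category: finitely complete, coequalizers of kernel pairs,
pullback-stable regular epimorphisms. -/
class RegularCat (C : Type u) [Category.{v} C] : Prop where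
  hasFiniteLimits : HasFiniteLimits C
  hasCoeqOfKernelPair : ∀ {A B R : C} (f : A ⟶ B) (p1 p2 : R ⟶ A) (h : p1 ≫ f = p2 ≫ f),
    Nonempty (IsLimit (PullbackCone.mk p1 p2 h)) → HasCoequalizer p1 p2
  regEpiStable : ∀ {P A B Z : C} (f : A ⟶ B) (g : Z ⟶ B) (p1 : P ⟶ A) (p2 : P ⟶ Z)
    (h : p1 ≫ f = p2 ≫ g), Nonempty (IsLimit (PullbackCone.mk p1 p2 h)) →
    Nonempty (RegularEpi f) → Nonempty (RegularEpi p2)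

/-- A Barr-exact category: regular and every equivalence relation is effective. -/
class ExactCat (C : Type u) [Category.{v} C] extends RegularCat C : Prop where
  effective : ∀ {X : C} (ρ : RelOn X), ρ.IsEquivalence → ρ.Effective

/-- An internal reflexive graph. -/
structure ReflexiveGraph (C : Type u) [Category.{v} C] where
  C1 : C
  C0 : C
  d : C1 ⟶ C0
  c : C1 ⟶ C0
  e : C0 ⟶ C1
  ed : e ≫ d = 𝟙 C0
  ec : e ≫ c = 𝟙 C0

/-- An internal category structure on a reflexive graph, formulated via
generalized elements (equivalent to the usual pullback formulation in a
finitely complete category). `comp a b _` is the composite "`a` followed by `b`". -/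
structure CatStruct {C : Type u} [Category.{v} C] (G : ReflexiveGraph C) where
  comp : ∀ {Z : C} (a b : Z ⟶ G.C1), a ≫ G.c = b ≫ G.d → (Z ⟶ G.C1)
  comp_natural : ∀ {W Z : C} (w : W ⟶ Z) (a b : Z ⟶ G.C1) (h : a ≫ G.c = b ≫ G.d)
      (h' : (w ≫ a) ≫ G.c = (w ≫ b) ≫ G.d),
      w ≫ comp a b h = comp (w ≫ a) (w ≫ b) h'
  comp_d : ∀ {Z : C} (a b : Z ⟶ G.C1) (h : a ≫ G.c = b ≫ G.d), comp a b h ≫ G.d = a ≫ G.d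
  comp_c : ∀ {Z : C} (a b : Z ⟶ G.C1) (h : a ≫ G.c = b ≫ G.d), comp a b h ≫ G.c = b ≫ G.c
  comp_unit_l : ∀ {Z : C} (a : Z ⟶ G.C1) (h : (a ≫ G.d ≫ G.e) ≫ G.c = a ≫ G.d),
      comp (a ≫ G.d ≫ G.e) a h = a
  comp_unit_r : ∀ {Z : C} (a : Z ⟶ G.C1) (h : a ≫ G.c = (a ≫ G.c ≫ G.e) ≫ G.d),
      comp a (a ≫ G.c ≫ G.e) h = a
  comp_assoc : ∀ {Z : C} (a b c' : Z ⟶ G.C1) (h1 : a ≫ G.c = b ≫ G.d)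
      (h2 : b ≫ G.c = c' ≫ G.d)
      (h3 : comp a b h1 ≫ G.c = c' ≫ G.d)
      (h4 : a ≫ G.c = comp b c' h2 ≫ G.d),
      comp (comp a b h1) c' h3 = comp a (comp b c' h2) h4

/-- The internal category has inverses, i.e. is an internal groupoid. -/
def CatStruct.HasInverses {C : Type u} [Category.{v} C] {G : ReflexiveGraph C}
    (S : CatStruct G) : Prop :=
  ∃ i : G.C1 ⟶ G.C1, i ≫ G.d = G.c ∧ i ≫ G.c = G.d ∧
    (∀ {Z : C} (a : Z ⟶ G.C1) (h : a ≫ G.c = (a ≫ i) ≫ G.d),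
      S.comp a (a ≫ i) h = a ≫ G.d ≫ G.e) ∧
    (∀ {Z : C} (a : Z ⟶ G.C1) (h : (a ≫ i) ≫ G.c = a ≫ G.d),
      S.comp (a ≫ i) a h = a ≫ G.c ≫ G.e)

/-- An internal groupoid. -/
structure GroupoidObj (C : Type u) [Category.{v} C] where
  graph : ReflexiveGraph C
  str : CatStruct graph
  hasInv : str.HasInverses

/-- Internal functors between internal groupoids. -/
@[ext]
structure GrpdHom (A B : GroupoidObj C) where
  f0 : A.graph.C0 ⟶ B.graph.C0
  f1 : A.graph.C1 ⟶ B.graph.C1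
  hd : f1 ≫ B.graph.d = A.graph.d ≫ f0
  hc : f1 ≫ B.graph.c = A.graph.c ≫ f0
  he : A.graph.e ≫ f1 = f0 ≫ B.graph.e
  hm : ∀ {Z : C} (a b : Z ⟶ A.graph.C1) (h : a ≫ A.graph.c = b ≫ A.graph.d)
      (h' : (a ≫ f1) ≫ B.graph.c = (b ≫ f1) ≫ B.graph.d),
      A.str.comp a b h ≫ f1 = B.str.comp (a ≫ f1) (b ≫ f1) h'

lemma GrpdHom.cond {A B : GroupoidObj C} (f : GrpdHom A B) {Z : C} {a b : Z ⟶ A.graph.C1}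
    (h : a ≫ A.graph.c = b ≫ A.graph.d) :
    (a ≫ f.f1) ≫ B.graph.c = (b ≫ f.f1) ≫ B.graph.d := by
  rw [Category.assoc, f.hc, Category.assoc, f.hd, ← Category.assoc, h, Category.assoc]

def GrpdHom.id (A : GroupoidObj C) : GrpdHom A A where
  f0 := 𝟙 _
  f1 := 𝟙 _
  hd := by simp
  hc := by simp
  he := by simp
  hm := by intros; simp

def GrpdHom.comp {A B D : GroupoidObj C} (f : GrpdHom A B) (g : GrpdHom B D) : GrpdHom A D where
  f0 := f.f0 ≫ g.f0
  f1 := f.f1 ≫ g.f1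
  hd := by rw [Category.assoc, g.hd, ← Category.assoc, f.hd, Category.assoc]
  hc := by rw [Category.assoc, g.hc, ← Category.assoc, f.hc, Category.assoc]
  he := by rw [← Category.assoc, f.he, Category.assoc, g.he, ← Category.assoc]
  hm := by
    intro Z a b h h'
    rw [← Category.assoc, f.hm a b h (f.cond h), g.hm _ _ (f.cond h) (g.cond (f.cond h))]
    simp only [Category.assoc]

instance : Category (GroupoidObj C) where
  Hom := GrpdHom
  id := GrpdHom.id
  comp := GrpdHom.comp
  id_comp f := by apply GrpdHom.ext <;> simp [GrpdHom.comp, GrpdHom.id]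
  comp_id f := by apply GrpdHom.ext <;> simp [GrpdHom.comp, GrpdHom.id]
  assoc f g h := by apply GrpdHom.ext <;> simp [GrpdHom.comp]

/-- Coerce a morphism of internal groupoids to its underlying data. -/
def homToGrpdHom {A B : GroupoidObj C} (f : A ⟶ B) : GrpdHom A B := f

/-- Morphisms of reflexive graphs. -/
@[ext]
structure RGHom (A B : ReflexiveGraph C) where
  f0 : A.C0 ⟶ B.C0
  f1 : A.C1 ⟶ B.C1
  hd : f1 ≫ B.d = A.d ≫ f0
  hc : f1 ≫ B.c = A.c ≫ f0
  he : A.e ≫ f1 = f0 ≫ B.e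

instance : Category (ReflexiveGraph C) where
  Hom := RGHom
  id A := ⟨𝟙 _, 𝟙 _, by simp, by simp, by simp⟩
  comp f g := ⟨f.f0 ≫ g.f0, f.f1 ≫ g.f1,
    by rw [Category.assoc, g.hd, ← Category.assoc, f.hd, Category.assoc],
    by rw [Category.assoc, g.hc, ← Category.assoc, f.hc, Category.assoc],
    by rw [← Category.assoc, f.he, Category.assoc, g.he, ← Category.assoc]⟩
  id_comp f := by apply RGHom.ext <;> simp
  comp_id f := by apply RGHom.ext <;> simp
  assoc f g h := by apply RGHom.ext <;> simp

def homToRGHom {A B : ReflexiveGraph C} (f : A ⟶ B) : RGHom A B := f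

/-- The forgetful functor from internal groupoids to reflexive graphs. -/
def forgetToRG (C : Type u) [Category.{v} C] : GroupoidObj C ⥤ ReflexiveGraph C where
  obj A := A.graph
  map f := ⟨(homToGrpdHom f).f0, (homToGrpdHom f).f1, (homToGrpdHom f).hd,
    (homToGrpdHom f).hc, (homToGrpdHom f).he⟩
  map_id A := by apply RGHom.ext <;> rfl
  map_comp f g := by apply RGHom.ext <;> rfl

/-- A discrete internal groupoid: the unit is an isomorphism. -/
def GroupoidObj.IsDiscrete (A : GroupoidObj C) : Prop := IsIso A.graph.e

/-- An internal double groupoid (an internal groupoid in internal groupoids) is a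
2-groupoid when its groupoid of objects is discrete. -/
def Is2Grpd (D : GroupoidObj (GroupoidObj C)) : Prop := D.graph.C0.IsDiscrete

/-- Zero morphisms, defined without extra structure: morphisms factoring through a
zero object. -/
def IsZeroMor {A B : C} (f : A ⟶ B) : Prop :=
  ∃ (Z : C) (_ : IsZero Z) (g : A ⟶ Z) (h : Z ⟶ B), f = g ≫ h

/-- `κ` is a kernel of `α`. -/
def IsKernelOf {A B K : C} (κ : K ⟶ A) (α : A ⟶ B) : Prop :=
  IsZeroMor (κ ≫ α) ∧ ∀ {Z : C} (g : Z ⟶ A), IsZeroMor (g ≫ α) → ∃! l : Z ⟶ K, l ≫ κ = g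

/-- A split extension with kernel object `Xo`. -/
structure SplitExtOn (Xo : C) where
  A : C
  B : C
  κ : Xo ⟶ A
  α : A ⟶ B
  β : B ⟶ A
  split : β ≫ α = 𝟙 B
  ker : IsKernelOf κ α

/-- A generic split extension with kernel `Xo`: terminal among split extensions
with kernel `Xo` (morphisms being the identity on the kernel). -/
def IsGenericSplitExt {Xo : C} (E : SplitExtOn Xo) : Prop :=
  ∀ E' : SplitExtOn Xo, ∃! vw : (E'.A ⟶ E.A) × (E'.B ⟶ E.B),
    E'.κ ≫ vw.1 = E.κ ∧ vw.1 ≫ E.α = E'.α ≫ vw.2 ∧ E'.β ≫ vw.1 = vw.2 ≫ E.β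

/-- Action representability: every object admits a generic split extension. -/
def ActionRepresentable (C : Type u) [Category.{v} C] : Prop :=
  ∀ X : C, ∃ E : SplitExtOn X, IsGenericSplitExt E

/-- A protoadditive functor: preserves kernels of split epimorphisms. -/
def Protoadditive {X : Type u'} [Category.{v'} X] (H : X ⥤ C) : Prop :=
  ∀ {A B K : X} (α : A ⟶ B) (β : B ⟶ A), β ≫ α = 𝟙 B →
    ∀ (κ : K ⟶ A), IsKernelOf κ α → IsKernelOf (H.map κ) (H.map α)

/-- A semi-abelian category: pointed, Barr-exact, protomodular (split short five
lemma), with binary coproducts. -/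
class SemiAbelian (C : Type u) [Category.{v} C] extends ExactCat C : Prop where
  hasZeroObject : HasZeroObject C
  hasBinaryCoproducts : HasBinaryCoproducts C
  ssfl : ∀ {A B B' Co : C} (k : A ⟶ B) (p : B ⟶ Co) (s : Co ⟶ B)
      (k' : A ⟶ B') (p' : B' ⟶ Co) (s' : Co ⟶ B') (b : B ⟶ B'),
      s ≫ p = 𝟙 Co → s' ≫ p' = 𝟙 Co → IsKernelOf k p → IsKernelOf k' p' →
      k ≫ b = k' → b ≫ p' = p → s ≫ b = s' → IsIso b

/-- A natural Mal'tsev operation on a category with binary products. -/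
def IsNaturallyMaltsev (C : Type u) [Category.{v} C] [HasBinaryProducts C] : Prop :=
  ∃ p : ∀ A : C, (A ⨯ A) ⨯ A ⟶ A,
    (∀ {A B : C} (f : A ⟶ B), prod.map (prod.map f f) f ≫ p B = p A ≫ f) ∧
    (∀ A : C, prod.lift (prod.lift prod.fst prod.snd) prod.snd ≫ p A
        = (prod.fst : A ⨯ A ⟶ A)) ∧
    (∀ A : C, prod.lift (prod.lift prod.fst prod.fst) prod.snd ≫ p A
        = (prod.snd : A ⨯ A ⟶ A))

section KeyLemma

variable {C : Type u} [Category.{v} C] [HasFiniteLimits C] [MaltsevCat C]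
variable {G : ReflexiveGraph C}

/-- Composition respects (propositional) equality of arguments. -/
lemma CatStruct.comp_congr (S : CatStruct G) {Z : C} {a a' b b' : Z ⟶ G.C1}
    (ha : a = a') (hb : b = b') (h : a ≫ G.c = b ≫ G.d)
    (h' : a' ≫ G.c = b' ≫ G.d) : S.comp a b h = S.comp a' b' h' := by
  subst ha; subst hb; rfl

lemma comp_eq_comp (S S' : CatStruct G) {Z : C} (a b : Z ⟶ G.C1)
    (h : a ≫ G.c = b ≫ G.d) : S.comp a b h = S'.comp a b h := by
  classical
  -- object of composable pairs
  set P := pullback G.c G.d with hP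
  set p1 : P ⟶ G.C1 := pullback.fst G.c G.d with hp1
  set p2 : P ⟶ G.C1 := pullback.snd G.c G.d with hp2
  have hpc : p1 ≫ G.c = p2 ≫ G.d := pullback.condition
  set M : P ⟶ G.C1 := S.comp p1 p2 hpc with hM
  set M' : P ⟶ G.C1 := S'.comp p1 p2 hpc with hM'
  -- the relation W on C1 : pairs where the two compositions agree
  set E := equalizer M M' with hE
  set ε : E ⟶ P := equalizer.ι M M' with hε
  set r1 : E ⟶ G.C1 := ε ≫ p1 with hr1
  set r2 : E ⟶ G.C1 := ε ≫ p2 with hr2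
  have Wjm : ∀ {Z' : C} (f g : Z' ⟶ E), f ≫ r1 = g ≫ r1 → f ≫ r2 = g ≫ r2 → f = g := by
    intro Z' f g h1 h2
    have hfg : f ≫ ε = g ≫ ε := by
      apply pullback.hom_ext
      · simpa [hr1, Category.assoc] using h1
      · simpa [hr2, Category.assoc] using h2
    exact Mono.right_cancellation (f := ε) f g hfg
  -- membership in W
  have mem : ∀ {Z' : C} (u v : Z' ⟶ G.C1) (huv : u ≫ G.c = v ≫ G.d),
      S.comp u v huv = S'.comp u v huv → ∃ w : Z' ⟶ E, w ≫ r1 = u ∧ w ≫ r2 = v := by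
    intro Z' u v huv hcomp
    set q : Z' ⟶ P := pullback.lift u v huv with hq
    have hq1 : q ≫ p1 = u := pullback.lift_fst _ _ _
    have hq2 : q ≫ p2 = v := pullback.lift_snd _ _ _
    have hcond : (q ≫ p1) ≫ G.c = (q ≫ p2) ≫ G.d := by
      rw [Category.assoc, hpc, Category.assoc]
    have hqM : q ≫ M = q ≫ M' := by
      rw [hM, hM', S.comp_natural q p1 p2 hpc hcond, S'.comp_natural q p1 p2 hpc hcond,
        S.comp_congr hq1 hq2 hcond huv,
        S'.comp_congr hq1 hq2 hcond huv]
      exact hcomp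
    refine ⟨equalizer.lift q hqM, ?_, ?_⟩
    · rw [hr1, ← Category.assoc, hε, equalizer.lift_ι]; exact hq1
    · rw [hr2, ← Category.assoc, hε, equalizer.lift_ι]; exact hq2
  -- every element of E projects to a pair with equal compositions (converse use)
  -- the relation T on E
  set f1 : E ⨯ E ⟶ G.C1 ⨯ G.C1 := prod.lift (prod.fst ≫ r1) (prod.snd ≫ r2) with hf1
  set g1 : E ⟶ G.C1 ⨯ G.C1 := prod.lift r1 r2 with hg1
  set T := pullback f1 g1 with hT
  set pf : T ⟶ E ⨯ E := pullback.fst f1 g1 with hpf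
  set ps : T ⟶ E := pullback.snd f1 g1 with hps
  set t1 : T ⟶ E := pf ≫ prod.fst with ht1
  set t2 : T ⟶ E := pf ≫ prod.snd with ht2
  have hcondT : pf ≫ f1 = ps ≫ g1 := pullback.condition
  have hwit1 : ps ≫ r1 = t1 ≫ r1 := by
    have := congrArg (fun k => k ≫ (prod.fst : G.C1 ⨯ G.C1 ⟶ G.C1)) hcondT
    simp [hf1, hg1, ht1, Category.assoc] at this
    rw [ht1, Category.assoc, this]; exact (prod.lift_fst ..).symm
  have hwit2 : ps ≫ r2 = t2 ≫ r2 := by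
    have := congrArg (fun k => k ≫ (prod.snd : G.C1 ⨯ G.C1 ⟶ G.C1)) hcondT
    simp [hf1, hg1, ht2, Category.assoc] at this
    rw [ht2, Category.assoc, this]; exact (prod.lift_snd ..).symm
  have Tjm : ∀ {Z' : C} (f g : Z' ⟶ T), f ≫ t1 = g ≫ t1 → f ≫ t2 = g ≫ t2 → f = g := by
    intro Z' f g h1 h2
    apply pullback.hom_ext
    · apply Limits.prod.hom_ext
      · simpa [ht1, Category.assoc] using h1
      · simpa [ht2, Category.assoc] using h2
    · apply Wjm
      · rw [Category.assoc, Category.assoc, hwit1, ← Category.assoc, ← Category.assoc,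
          h1]
        simp [hr1, Category.assoc]
      · rw [Category.assoc, Category.assoc, hwit2, ← Category.assoc, ← Category.assoc,
          h2]
        simp [hr2, Category.assoc]
  set ρ : RelOn E := ⟨T, t1, t2, fun f g => Tjm f g⟩ with hρ
  have hrefl : ρ.Reflexive := by
    refine ⟨pullback.lift (prod.lift (𝟙 E) (𝟙 E)) (𝟙 E) ?_, ?_, ?_⟩
    · apply Limits.prod.hom_ext <;> simp [hf1, hg1]
    · show _ ≫ t1 = 𝟙 E
      rw [ht1, ← Category.assoc, hpf, pullback.lift_fst]; exact prod.lift_fst ..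
    · show _ ≫ t2 = 𝟙 E
      rw [ht2, ← Category.assoc, hpf, pullback.lift_fst]; exact prod.lift_snd ..
  obtain ⟨hsymm, htrans⟩ := MaltsevCat.refl_is_equiv ρ hrefl
  -- a T-element constructor
  have mkT : ∀ {Z' : C} (u v w : Z' ⟶ E), w ≫ r1 = u ≫ r1 → w ≫ r2 = v ≫ r2 →
      ∃ t : Z' ⟶ T, t ≫ t1 = u ∧ t ≫ t2 = v := by
    intro Z' u v w hw1 hw2
    refine ⟨pullback.lift (prod.lift u v) w ?_, ?_, ?_⟩
    · apply Limits.prod.hom_ext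
      · simp [hf1, hg1, hw1, Category.assoc]
        exact (prod.lift_fst ..).trans (prod.lift_fst ..).symm
      · simp [hf1, hg1, hw2, Category.assoc]
        exact (prod.lift_snd ..).trans (prod.lift_snd ..).symm
    · rw [ht1, ← Category.assoc, hpf, pullback.lift_fst]; exact prod.lift_fst ..
    · rw [ht2, ← Category.assoc, hpf, pullback.lift_fst]; exact prod.lift_snd ..
  -- the three W-elements
  have hbd : b ≫ G.d ≫ G.e = a ≫ G.c ≫ G.e := by rw [← Category.assoc, ← h, Category.assoc]
  -- u : (a, a≫c≫e)
  have hu_cond : a ≫ G.c = (a ≫ G.c ≫ G.e) ≫ G.d := by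
    rw [Category.assoc, Category.assoc, G.ed, Category.comp_id]
  obtain ⟨wu, hwu1, hwu2⟩ := mem a (a ≫ G.c ≫ G.e) hu_cond
    (by rw [S.comp_unit_r a hu_cond, S'.comp_unit_r a hu_cond])
  -- v : (a≫c≫e, a≫c≫e)
  have hx_de : (a ≫ G.c ≫ G.e) ≫ G.d ≫ G.e = a ≫ G.c ≫ G.e := by
    rw [Category.assoc, Category.assoc, ← Category.assoc G.e, G.ed, Category.id_comp]
  have hv_cond : (a ≫ G.c ≫ G.e) ≫ G.c = (a ≫ G.c ≫ G.e) ≫ G.d := by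
    simp [G.ec, G.ed]
  have hv_cond' : ((a ≫ G.c ≫ G.e) ≫ G.d ≫ G.e) ≫ G.c = (a ≫ G.c ≫ G.e) ≫ G.d :=
    by rw [hx_de]; exact hv_cond
  obtain ⟨wv, hwv1, hwv2⟩ := mem (a ≫ G.c ≫ G.e) (a ≫ G.c ≫ G.e) hv_cond
    (by
      rw [← S.comp_congr hx_de rfl hv_cond' hv_cond, ← S'.comp_congr hx_de rfl hv_cond' hv_cond,
        S.comp_unit_l _ hv_cond', S'.comp_unit_l _ hv_cond'])
  -- w : (b≫d≫e, b)
  have hw_cond : (b ≫ G.d ≫ G.e) ≫ G.c = b ≫ G.d := by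
    rw [Category.assoc, Category.assoc, G.ec, Category.comp_id]
  obtain ⟨ww, hww1, hww2⟩ := mem (b ≫ G.d ≫ G.e) b hw_cond
    (by rw [S.comp_unit_l b hw_cond, S'.comp_unit_l b hw_cond])
  -- T-elements
  obtain ⟨A, hA1, hA2⟩ := mkT wu wv wu rfl (by rw [hwu2, hwv2])
  obtain ⟨B', hB'1, hB'2⟩ := mkT ww wv wv (by rw [hwv1, hww1, hbd]) rfl
  obtain ⟨σ, hσ1, hσ2⟩ := hsymm
  set B : Z ⟶ T := B' ≫ σ with hB
  have hB1 : B ≫ t1 = wv := by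
    rw [hB, Category.assoc]
    show B' ≫ (σ ≫ ρ.r1) = wv
    rw [hσ1]; exact hB'2
  have hB2 : B ≫ t2 = ww := by
    rw [hB, Category.assoc]
    show B' ≫ (σ ≫ ρ.r2) = ww
    rw [hσ2]; exact hB'1
  obtain ⟨t, ht1', ht2'⟩ := htrans A B (by show A ≫ t2 = B ≫ t1; rw [hA2, hB1])
  have hta : (t ≫ ps) ≫ r1 = a := by
    rw [Category.assoc, hwit1, ← Category.assoc]
    show (t ≫ ρ.r1) ≫ r1 = a
    rw [ht1', hA1]; exact hwu1
  have htb : (t ≫ ps) ≫ r2 = b := by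
    rw [Category.assoc, hwit2, ← Category.assoc]
    show (t ≫ ρ.r2) ≫ r2 = b
    rw [ht2', hB2]; exact hww2
  -- conclude
  have final : ∀ (z : Z ⟶ P), z ≫ p1 = a → z ≫ p2 = b → z ≫ M = z ≫ M' →
      S.comp a b h = S'.comp a b h := by
    intro z hz1 hz2 hzM
    have hzcond : (z ≫ p1) ≫ G.c = (z ≫ p2) ≫ G.d := by
      rw [Category.assoc, hpc, ← Category.assoc]
    calc S.comp a b h = z ≫ M := by
          rw [hM, S.comp_natural z p1 p2 hpc hzcond,
            S.comp_congr hz1 hz2 hzcond h]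
      _ = z ≫ M' := hzM
      _ = S'.comp a b h := by
          rw [hM', S'.comp_natural z p1 p2 hpc hzcond,
            S'.comp_congr hz1 hz2 hzcond h]
  refine final ((t ≫ ps) ≫ ε) ?_ ?_ ?_
  · rw [Category.assoc, ← hr1]; exact hta
  · rw [Category.assoc, ← hr2]; exact htb
  · simp only [Category.assoc, hε]
    rw [equalizer.condition M M']

end KeyLemma

/-- In a Mal'tsev category, any internal reflexive graph admits at most
one internal category structure. -/
theorem stmt1 {C : Type u} [Category.{v} C] [HasFiniteLimits C] [MaltsevCat C]
    (G : ReflexiveGraph C) (S S' : CatStruct G) : S = S' := by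
  have hcomp : @CatStruct.comp _ _ _ S = @CatStruct.comp _ _ _ S' := by
    funext Z a b h
    exact comp_eq_comp S S' a b h
  cases S; cases S'
  cases hcomp
  rfl
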